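/- Let d ≥ 1, let Δ ∈ ℝ^d have all coordinates positive with Δ̄ = ∏_{j=1}^d Δ_j, let s ∈ ℝ^d, and let G = {z∘Δ + s : z ∈ ℤ^d}. For a finitely supported function g : G → ℝ, define its linear interpolation I[g] : ℝ^d → ℝ by I[g](u) = (1/Δ̄) Σ_{z∈G} 𝟙_{∏_j[0,Δ_j)}(u−z) Σ_{v∈{0,1}^d} g(z+v∘Δ) ∏_{j=1}^d (u_j−z_j)^{v_j}(Δ_j−u_j+z_j)^{1−v_j}. Then for finitely supported g, h : G → ℝ, ∫_{ℝ^d} I[g](u) I[h](u) du = Δ̄ Σ_{z∈G} g(z)h(z) + Δ̄·ε, where |ε| ≤ (Σ_{z∈G}|g(z)|) · sup_{v∈{0,1}^d, z∈G} |h(z+v∘Δ)−h(z)| + (Σ_{z∈G}|h(z)|) · sup_{v∈{0,1}^d, z∈G} |g(z+v∘Δ)−g(z)|. -/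

import Mathlib

open MeasureTheory
open scoped BigOperators

/-- The linear interpolation `I[g]` of a function `g` defined on the grid
`G = {z∘Δ + s : z ∈ ℤ^d}` (grid points indexed by `ζ ∈ ℤ^d`). -/
noncomputable def interpol (d : ℕ) (Δ s : Fin d → ℝ) (g : (Fin d → ℤ) → ℝ)
    (u : Fin d → ℝ) : ℝ :=
  (∏ j, Δ j)⁻¹ *
    ∑' ζ : Fin d → ℤ,
      (if ∀ j, u j - ((ζ j : ℝ) * Δ j + s j) ∈ Set.Ico (0 : ℝ) (Δ j) then (1 : ℝ) else 0) *
        ∑ v : Fin d → Bool,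
          g (fun j => ζ j + if v j then 1 else 0) *
            ∏ j, (u j - ((ζ j : ℝ) * Δ j + s j)) ^ (if v j then 1 else 0) *
              (Δ j - u j + ((ζ j : ℝ) * Δ j + s j)) ^ (if v j then 0 else 1)

namespace InterpolAux

variable (d : ℕ) (Δ s : Fin d → ℝ)

/-- coordinate of the grid point indexed by `ζ` -/
def zpt (ζ : Fin d → ℤ) (j : Fin d) : ℝ := (ζ j : ℝ) * Δ j + s j

/-- the half-open cell at grid point `ζ` -/
def cell (ζ : Fin d → ℤ) : Set (Fin d → ℝ) :=
  Set.univ.pi fun j => Set.Ico (zpt d Δ s ζ j) (zpt d Δ s ζ j + Δ j)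

/-- the corner shifted from `ζ` by `v ∈ {0,1}^d` -/
def shift (v : Fin d → Bool) (ζ : Fin d → ℤ) : Fin d → ℤ :=
  fun j => ζ j + if v j then 1 else 0

lemma mem_cell_iff (ζ : Fin d → ℤ) (u : Fin d → ℝ) :
    u ∈ cell d Δ s ζ ↔ ∀ j, u j - ((ζ j : ℝ) * Δ j + s j) ∈ Set.Ico (0 : ℝ) (Δ j) := by
  simp only [cell, zpt, Set.mem_pi, Set.mem_univ, forall_true_left, Set.mem_Ico]
  constructor
  · intro H j; obtain ⟨h1, h2⟩ := H j; constructor <;> linarith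
  · intro H j; obtain ⟨h1, h2⟩ := H j; constructor <;> linarith

lemma measurableSet_cell (ζ : Fin d → ℤ) : MeasurableSet (cell d Δ s ζ) :=
  MeasurableSet.univ_pi fun _ => measurableSet_Ico

/-- the tensor-product basis function -/
def pv (ζ : Fin d → ℤ) (v : Fin d → Bool) (u : Fin d → ℝ) : ℝ :=
  ∏ j, (if v j then u j - zpt d Δ s ζ j else Δ j - u j + zpt d Δ s ζ j)

lemma pv_eq (ζ : Fin d → ℤ) (v : Fin d → Bool) (u : Fin d → ℝ) :
    (∏ j, (u j - ((ζ j : ℝ) * Δ j + s j)) ^ (if v j then 1 else 0) *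
      (Δ j - u j + ((ζ j : ℝ) * Δ j + s j)) ^ (if v j then 0 else 1)) = pv d Δ s ζ v u := by
  unfold pv zpt
  refine Finset.prod_congr rfl fun j _ => ?_
  cases hv : v j <;> simp

lemma sum_pv (ζ : Fin d → ℤ) (u : Fin d → ℝ) :
    ∑ v : Fin d → Bool, pv d Δ s ζ v u = ∏ j, Δ j := by
  unfold pv
  have key := Finset.prod_univ_sum (fun _ : Fin d => (Finset.univ : Finset Bool))
    (fun j b => if b then u j - zpt d Δ s ζ j else Δ j - u j + zpt d Δ s ζ j)
  rw [Fintype.piFinset_univ] at key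
  rw [← key]
  refine Finset.prod_congr rfl fun j _ => ?_
  rw [Fintype.sum_bool]
  norm_num

lemma pv_nonneg {ζ : Fin d → ℤ} {v : Fin d → Bool} {u : Fin d → ℝ}
    (hu : u ∈ cell d Δ s ζ) : 0 ≤ pv d Δ s ζ v u := by
  rw [mem_cell_iff] at hu
  refine Finset.prod_nonneg fun j _ => ?_
  obtain ⟨h1, h2⟩ := hu j
  simp only [zpt]
  cases v j <;> simp <;> linarith

lemma continuous_pv (ζ : Fin d → ℤ) (v : Fin d → Bool) :
    Continuous (pv d Δ s ζ v) := by
  unfold pv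
  exact continuous_finset_prod _ fun j _ => by
    cases v j <;> simp <;> fun_prop

/-- the local polynomial: `FF g ζ = Δ̄ ⬝ I[g]` on the cell at `ζ` -/
def FF (g : (Fin d → ℤ) → ℝ) (ζ : Fin d → ℤ) (u : Fin d → ℝ) : ℝ :=
  ∑ v : Fin d → Bool, g (shift d v ζ) * pv d Δ s ζ v u

lemma continuous_FF (g : (Fin d → ℤ) → ℝ) (ζ : Fin d → ℤ) :
    Continuous (FF d Δ s g ζ) :=
  continuous_finset_sum _ fun v _ => continuous_const.mul (continuous_pv d Δ s ζ v)

lemma oneDimInt' : ∀ (a δ : ℝ), IntervalIntegrable (fun x : ℝ => x) volume a (a + δ) :=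
  fun a δ => (continuous_id'.intervalIntegrable a (a + δ))

lemma oneDim1 (a δ : ℝ) (hδ : 0 < δ) : ∫ x in Set.Ico a (a + δ), (x - a) = δ^2/2 := by
  rw [setIntegral_congr_set Ico_ae_eq_Ioc, ← intervalIntegral.integral_of_le (by linarith)]
  rw [intervalIntegral.integral_sub (oneDimInt' a δ) intervalIntegrable_const]
  rw [integral_id, intervalIntegral.integral_const]
  simp; ring

lemma oneDim2 (a δ : ℝ) (hδ : 0 < δ) : ∫ x in Set.Ico a (a + δ), (δ - x + a) = δ^2/2 := by
  have h : ∀ x : ℝ, δ - x + a = (δ + a) - x := by intro x; ring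
  simp_rw [h]
  rw [setIntegral_congr_set Ico_ae_eq_Ioc, ← intervalIntegral.integral_of_le (by linarith)]
  rw [intervalIntegral.integral_sub intervalIntegrable_const (oneDimInt' a δ)]
  rw [integral_id, intervalIntegral.integral_const]
  simp; ring

lemma cell_subset_Icc (ζ : Fin d → ℤ) :
    cell d Δ s ζ ⊆ Set.Icc (zpt d Δ s ζ) (fun j => zpt d Δ s ζ j + Δ j) := by
  rw [← Set.pi_univ_Icc]
  exact Set.pi_mono fun j _ => Set.Ico_subset_Icc_self

lemma integrableOn_cell {f : (Fin d → ℝ) → ℝ} (hf : Continuous f) (ζ : Fin d → ℤ) :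
    IntegrableOn f (cell d Δ s ζ) :=
  (hf.continuousOn.integrableOn_compact isCompact_Icc).mono_set (cell_subset_Icc d Δ s ζ)

lemma volume_cell (hΔ : ∀ j, 0 < Δ j) (ζ : Fin d → ℤ) :
    volume (cell d Δ s ζ) = ENNReal.ofReal (∏ j, Δ j) := by
  rw [cell, volume_pi_pi]
  simp only [Real.volume_Ico, add_sub_cancel_left]
  rw [← ENNReal.ofReal_prod_of_nonneg]
  exact fun j _ => (hΔ j).le

lemma setIntegral_const_cell (hΔ : ∀ j, 0 < Δ j) (ζ : Fin d → ℤ) (c : ℝ) :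
    ∫ _ in cell d Δ s ζ, c = (∏ j, Δ j) * c := by
  rw [setIntegral_const, measureReal_def, volume_cell d Δ s hΔ, smul_eq_mul,
    ENNReal.toReal_ofReal (Finset.prod_nonneg fun j _ => (hΔ j).le)]

lemma indicator_cell_pv (ζ : Fin d → ℤ) (v : Fin d → Bool) (u : Fin d → ℝ) :
    (cell d Δ s ζ).indicator (pv d Δ s ζ v) u =
      ∏ j, (Set.Ico (zpt d Δ s ζ j) (zpt d Δ s ζ j + Δ j)).indicator
        (fun x => if v j then x - zpt d Δ s ζ j else Δ j - x + zpt d Δ s ζ j) (u j) := by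
  by_cases hu : u ∈ cell d Δ s ζ
  · rw [Set.indicator_of_mem hu]
    rw [cell, Set.mem_pi] at hu
    refine Finset.prod_congr rfl fun j _ => ?_
    rw [Set.indicator_of_mem (hu j (Set.mem_univ j))]
  · rw [Set.indicator_of_notMem hu]
    rw [cell, Set.mem_pi] at hu
    push_neg at hu
    obtain ⟨j, _, hj⟩ := hu
    exact (Finset.prod_eq_zero (Finset.mem_univ j) (Set.indicator_of_notMem hj _)).symm

lemma integral_pv (hΔ : ∀ j, 0 < Δ j) (ζ : Fin d → ℤ) (v : Fin d → Bool) :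
    ∫ u in cell d Δ s ζ, pv d Δ s ζ v u = ∏ j, (Δ j ^ 2 / 2) := by
  rw [← integral_indicator (measurableSet_cell d Δ s ζ)]
  simp_rw [indicator_cell_pv]
  rw [MeasureTheory.volume_pi, MeasureTheory.integral_fintype_prod_eq_prod (ι := Fin d)
    (fun j x => (Set.Ico (zpt d Δ s ζ j) (zpt d Δ s ζ j + Δ j)).indicator
      (fun y => if v j then y - zpt d Δ s ζ j else Δ j - y + zpt d Δ s ζ j) x)]
  refine Finset.prod_congr rfl fun j _ => ?_
  rw [integral_indicator measurableSet_Ico]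
  cases hv : v j
  · simpa using oneDim2 (zpt d Δ s ζ j) (Δ j) (hΔ j)
  · simpa using oneDim1 (zpt d Δ s ζ j) (Δ j) (hΔ j)

lemma prod_sq_half : ∏ j, (Δ j ^ 2 / 2) = (∏ j, Δ j) ^ 2 / 2 ^ d := by
  rw [Finset.prod_div_distrib, Finset.prod_pow, Finset.prod_const, Finset.card_univ,
    Fintype.card_fin]

/-- cells are disjoint -/
lemma cell_disj (hΔ : ∀ j, 0 < Δ j) {ζ ζ' : Fin d → ℤ} {u : Fin d → ℝ}
    (h1 : u ∈ cell d Δ s ζ) (h2 : u ∈ cell d Δ s ζ') : ζ = ζ' := by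
  funext j
  rw [mem_cell_iff] at h1 h2
  obtain ⟨a1, b1⟩ := Set.mem_Ico.mp (h1 j)
  obtain ⟨a2, b2⟩ := Set.mem_Ico.mp (h2 j)
  have hΔj := hΔ j
  have c1 : ((ζ j : ℝ) - ζ' j) * Δ j < 1 * Δ j := by ring_nf; nlinarith
  have c2 : ((ζ' j : ℝ) - ζ j) * Δ j < 1 * Δ j := by ring_nf; nlinarith
  have d1 : ((ζ j : ℝ) - ζ' j) < 1 := lt_of_mul_lt_mul_right c1 hΔj.le
  have d2 : ((ζ' j : ℝ) - ζ j) < 1 := lt_of_mul_lt_mul_right c2 hΔj.le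
  have e1 : (ζ j : ℤ) - ζ' j < 1 := by exact_mod_cast d1
  have e2 : (ζ' j : ℤ) - ζ j < 1 := by exact_mod_cast d2
  omega

/-- finite-sum representation of `interpol` -/
lemma interpol_eq (g : (Fin d → ℤ) → ℝ) (S : Finset (Fin d → ℤ))
    (hS : ∀ ζ ∉ S, ∀ v : Fin d → Bool, g (shift d v ζ) = 0) (u : Fin d → ℝ) :
    interpol d Δ s g u =
      (∏ j, Δ j)⁻¹ * ∑ ζ ∈ S, (cell d Δ s ζ).indicator (FF d Δ s g ζ) u := by
  unfold interpol
  congr 1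
  rw [tsum_eq_sum (s := S) ?_]
  · refine Finset.sum_congr rfl fun ζ _ => ?_
    have hsum : (∑ v : Fin d → Bool,
        g (fun j => ζ j + if v j then 1 else 0) *
          ∏ j, (u j - ((ζ j : ℝ) * Δ j + s j)) ^ (if v j then 1 else 0) *
            (Δ j - u j + ((ζ j : ℝ) * Δ j + s j)) ^ (if v j then 0 else 1))
        = FF d Δ s g ζ u := by
      unfold FF
      refine Finset.sum_congr rfl fun v _ => ?_
      rw [pv_eq]
      rfl
    rw [hsum]
    by_cases hu : u ∈ cell d Δ s ζ
    · rw [if_pos ((mem_cell_iff d Δ s ζ u).mp hu), Set.indicator_of_mem hu, one_mul]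
    · rw [if_neg (fun hc => hu ((mem_cell_iff d Δ s ζ u).mpr hc)),
        Set.indicator_of_notMem hu, zero_mul]
  · intro ζ hζ
    rw [Finset.sum_eq_zero, mul_zero]
    intro v _
    have : g (fun j => ζ j + if v j then 1 else 0) = 0 := hS ζ hζ v
    rw [this, zero_mul]

lemma interpol_mul (hΔ : ∀ j, 0 < Δ j) (g h : (Fin d → ℤ) → ℝ) (S : Finset (Fin d → ℤ))
    (hSg : ∀ ζ ∉ S, ∀ v : Fin d → Bool, g (shift d v ζ) = 0)
    (hSh : ∀ ζ ∉ S, ∀ v : Fin d → Bool, h (shift d v ζ) = 0) (u : Fin d → ℝ) :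
    interpol d Δ s g u * interpol d Δ s h u =
      ((∏ j, Δ j)⁻¹)^2 *
        ∑ ζ ∈ S, (cell d Δ s ζ).indicator (fun w => FF d Δ s g ζ w * FF d Δ s h ζ w) u := by
  rw [interpol_eq d Δ s g S hSg u, interpol_eq d Δ s h S hSh u, mul_mul_mul_comm]
  congr 1
  · ring
  rw [Finset.sum_mul_sum]
  refine Finset.sum_congr rfl fun ζ hζ => ?_
  rw [Finset.sum_eq_single ζ]
  · by_cases hu : u ∈ cell d Δ s ζ
    · rw [Set.indicator_of_mem hu, Set.indicator_of_mem hu, Set.indicator_of_mem hu]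
    · rw [Set.indicator_of_notMem hu, Set.indicator_of_notMem hu,
        Set.indicator_of_notMem hu, zero_mul]
  · intro ζ' _ hne
    by_cases hu : u ∈ cell d Δ s ζ
    · by_cases hu' : u ∈ cell d Δ s ζ'
      · exact absurd (cell_disj d Δ s hΔ hu hu') (Ne.symm hne)
      · rw [Set.indicator_of_notMem hu', mul_zero]
    · rw [Set.indicator_of_notMem hu, zero_mul]
  · intro hζ'; exact absurd hζ hζ'

/-- the per-cell error bound. -/
lemma cell_bound (hΔ : ∀ j, 0 < Δ j) (g h : (Fin d → ℤ) → ℝ) (ωg ωh : ℝ)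
    (hωg : ∀ (v : Fin d → Bool) (ζ : Fin d → ℤ), |g (shift d v ζ) - g ζ| ≤ ωg)
    (hωh : ∀ (v : Fin d → Bool) (ζ : Fin d → ℤ), |h (shift d v ζ) - h ζ| ≤ ωh)
    (ζ : Fin d → ℤ) :
    |(∫ u in cell d Δ s ζ, FF d Δ s g ζ u * FF d Δ s h ζ u) - (∏ j, Δ j)^3 * (g ζ * h ζ)|
      ≤ (∏ j, Δ j)^3 *
        (ωg * (((2:ℝ)^d)⁻¹ * ∑ v : Fin d → Bool, |h (shift d v ζ)|) + |g ζ| * ωh) := by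
  classical
  set P := ∏ j, Δ j with hPdef
  have hP : 0 < P := Finset.prod_pos fun j _ => hΔ j
  have hωg0 : 0 ≤ ωg := le_trans (abs_nonneg _) (hωg (fun _ => false) ζ)
  have hωh0 : 0 ≤ ωh := le_trans (abs_nonneg _) (hωh (fun _ => false) ζ)
  have contg := continuous_FF d Δ s g ζ
  have conth := continuous_FF d Δ s h ζ
  -- integrabilities
  have intGH : IntegrableOn (fun u => FF d Δ s g ζ u * FF d Δ s h ζ u) (cell d Δ s ζ) :=
    integrableOn_cell d Δ s (contg.mul conth) ζ
  have intH : IntegrableOn (FF d Δ s h ζ) (cell d Δ s ζ) := integrableOn_cell d Δ s conth ζ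
  have intRG : IntegrableOn (fun u => (FF d Δ s g ζ u - P * g ζ) * FF d Δ s h ζ u)
      (cell d Δ s ζ) :=
    integrableOn_cell d Δ s ((contg.sub continuous_const).mul conth) ζ
  -- key pointwise identities
  have keyR : ∀ u, FF d Δ s g ζ u - P * g ζ =
      ∑ v : Fin d → Bool, (g (shift d v ζ) - g ζ) * pv d Δ s ζ v u := by
    intro u
    unfold FF
    rw [hPdef, ← sum_pv d Δ s ζ u, Finset.sum_mul, ← Finset.sum_sub_distrib]
    exact Finset.sum_congr rfl fun v _ => by ring
  -- bound |Rg| on the cell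
  have keyRb : ∀ u ∈ cell d Δ s ζ, |FF d Δ s g ζ u - P * g ζ| ≤ ωg * P := by
    intro u hu
    rw [keyR u]
    calc |∑ v : Fin d → Bool, (g (shift d v ζ) - g ζ) * pv d Δ s ζ v u|
        ≤ ∑ v : Fin d → Bool, |(g (shift d v ζ) - g ζ) * pv d Δ s ζ v u| :=
          Finset.abs_sum_le_sum_abs _ _
      _ ≤ ∑ v : Fin d → Bool, ωg * pv d Δ s ζ v u := by
          refine Finset.sum_le_sum fun v _ => ?_
          rw [abs_mul, abs_of_nonneg (pv_nonneg d Δ s hu)]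
          exact mul_le_mul_of_nonneg_right (hωg v ζ) (pv_nonneg d Δ s hu)
      _ = ωg * P := by rw [← Finset.mul_sum, sum_pv]
  -- bound |FF h| on the cell
  have keyHb : ∀ u ∈ cell d Δ s ζ,
      |FF d Δ s h ζ u| ≤ ∑ v : Fin d → Bool, |h (shift d v ζ)| * pv d Δ s ζ v u := by
    intro u hu
    unfold FF
    calc |∑ v : Fin d → Bool, h (shift d v ζ) * pv d Δ s ζ v u|
        ≤ ∑ v : Fin d → Bool, |h (shift d v ζ) * pv d Δ s ζ v u| :=
          Finset.abs_sum_le_sum_abs _ _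
      _ = ∑ v : Fin d → Bool, |h (shift d v ζ)| * pv d Δ s ζ v u := by
          refine Finset.sum_congr rfl fun v _ => ?_
          rw [abs_mul, abs_of_nonneg (pv_nonneg d Δ s hu)]
  -- integral of a pv-combination over the cell
  have intFF : ∀ c : (Fin d → Bool) → ℝ,
      ∫ u in cell d Δ s ζ, (∑ v : Fin d → Bool, c v * pv d Δ s ζ v u)
        = (∑ v : Fin d → Bool, c v) * (P^2 / 2^d) := by
    intro c
    rw [integral_finset_sum _ fun v _ =>
      integrableOn_cell d Δ s (f := fun u => c v * pv d Δ s ζ v u)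
        (continuous_const.mul (continuous_pv d Δ s ζ v)) ζ]
    rw [Finset.sum_mul]
    refine Finset.sum_congr rfl fun v _ => ?_
    rw [integral_const_mul, integral_pv d Δ s hΔ ζ v, prod_sq_half]
  have card2 : ((Finset.univ : Finset (Fin d → Bool)).card : ℝ) = 2^d := by
    simp [Finset.card_univ]
  have h2d : (0:ℝ) < 2^d := by positivity
  -- integral of FF h over the cell
  have keyH : ∫ u in cell d Δ s ζ, FF d Δ s h ζ u
      = (∑ v : Fin d → Bool, h (shift d v ζ)) * (P^2 / 2^d) :=
    intFF (fun v => h (shift d v ζ))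
  -- bound on ∫ (FF h) - P^2 h ζ
  have keyH2 : |(∫ u in cell d Δ s ζ, FF d Δ s h ζ u) - P^2 * h ζ| ≤ P^2 * ωh := by
    rw [keyH]
    have expand : (∑ v : Fin d → Bool, h (shift d v ζ)) * (P^2 / 2^d) - P^2 * h ζ
        = (P^2 / 2^d) * ∑ v : Fin d → Bool, (h (shift d v ζ) - h ζ) := by
      rw [Finset.sum_sub_distrib, Finset.sum_const, nsmul_eq_mul, card2]
      field_simp
    rw [expand, abs_mul, abs_of_nonneg (a := P^2 / 2^d) (by positivity)]
    calc P^2 / 2^d * |∑ v : Fin d → Bool, (h (shift d v ζ) - h ζ)|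
        ≤ P^2 / 2^d * ∑ v : Fin d → Bool, |h (shift d v ζ) - h ζ| :=
          mul_le_mul_of_nonneg_left (Finset.abs_sum_le_sum_abs _ _) (by positivity)
      _ ≤ P^2 / 2^d * ∑ _v : Fin d → Bool, ωh :=
          mul_le_mul_of_nonneg_left (Finset.sum_le_sum fun v _ => hωh v ζ) (by positivity)
      _ = P^2 * ωh := by
          rw [Finset.sum_const, nsmul_eq_mul, card2]
          field_simp
  -- decomposition of the integral
  have e1 : ∫ u in cell d Δ s ζ, (FF d Δ s g ζ u - P * g ζ) * FF d Δ s h ζ u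
      = (∫ u in cell d Δ s ζ, FF d Δ s g ζ u * FF d Δ s h ζ u)
        - P * g ζ * ∫ u in cell d Δ s ζ, FF d Δ s h ζ u := by
    have : (fun u => (FF d Δ s g ζ u - P * g ζ) * FF d Δ s h ζ u)
        = fun u => FF d Δ s g ζ u * FF d Δ s h ζ u - (P * g ζ) * FF d Δ s h ζ u := by
      funext u; ring
    rw [this, integral_sub intGH (intH.const_mul _), integral_const_mul]
  have decomp : (∫ u in cell d Δ s ζ, FF d Δ s g ζ u * FF d Δ s h ζ u) - P^3 * (g ζ * h ζ)
      = (∫ u in cell d Δ s ζ, (FF d Δ s g ζ u - P * g ζ) * FF d Δ s h ζ u)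
        + (P * g ζ) * ((∫ u in cell d Δ s ζ, FF d Δ s h ζ u) - P^2 * h ζ) := by
    rw [e1]; ring
  -- bound on the first term
  have b1 : |∫ u in cell d Δ s ζ, (FF d Δ s g ζ u - P * g ζ) * FF d Δ s h ζ u|
      ≤ ωg * P * ((∑ v : Fin d → Bool, |h (shift d v ζ)|) * (P^2 / 2^d)) := by
    have step1 : |∫ u in cell d Δ s ζ, (FF d Δ s g ζ u - P * g ζ) * FF d Δ s h ζ u|
        ≤ ∫ u in cell d Δ s ζ, |(FF d Δ s g ζ u - P * g ζ) * FF d Δ s h ζ u| := by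
      have := MeasureTheory.norm_integral_le_integral_norm (μ := volume.restrict (cell d Δ s ζ))
        (fun u => (FF d Δ s g ζ u - P * g ζ) * FF d Δ s h ζ u)
      simpa only [Real.norm_eq_abs] using this
    have step2 : ∫ u in cell d Δ s ζ, |(FF d Δ s g ζ u - P * g ζ) * FF d Δ s h ζ u|
        ≤ ∫ u in cell d Δ s ζ,
            (ωg * P) * (∑ v : Fin d → Bool, |h (shift d v ζ)| * pv d Δ s ζ v u) := by
      refine setIntegral_mono_on intRG.abs
        ((integrableOn_cell d Δ s (by
          exact continuous_const.mul (continuous_finset_sum _ fun v _ =>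
            continuous_const.mul (continuous_pv d Δ s ζ v))) ζ))
        (measurableSet_cell d Δ s ζ) fun u hu => ?_
      rw [abs_mul]
      exact mul_le_mul (keyRb u hu) (keyHb u hu) (abs_nonneg _)
        (by positivity)
    have step3 : ∫ u in cell d Δ s ζ,
          (ωg * P) * (∑ v : Fin d → Bool, |h (shift d v ζ)| * pv d Δ s ζ v u)
        = ωg * P * ((∑ v : Fin d → Bool, |h (shift d v ζ)|) * (P^2 / 2^d)) := by
      rw [integral_const_mul, intFF (fun v => |h (shift d v ζ)|)]
    rw [← step3]
    exact le_trans step1 step2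
  -- conclusion
  calc |(∫ u in cell d Δ s ζ, FF d Δ s g ζ u * FF d Δ s h ζ u) - P^3 * (g ζ * h ζ)|
      ≤ |∫ u in cell d Δ s ζ, (FF d Δ s g ζ u - P * g ζ) * FF d Δ s h ζ u|
        + |(P * g ζ) * ((∫ u in cell d Δ s ζ, FF d Δ s h ζ u) - P^2 * h ζ)| := by
        rw [decomp]; exact abs_add_le _ _
    _ ≤ ωg * P * ((∑ v : Fin d → Bool, |h (shift d v ζ)|) * (P^2 / 2^d))
        + (P * |g ζ|) * (P^2 * ωh) := by
        refine add_le_add b1 ?_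
        rw [abs_mul, abs_mul, abs_of_pos hP]
        exact mul_le_mul_of_nonneg_left keyH2 (by positivity)
    _ = P^3 * (ωg * (((2:ℝ)^d)⁻¹ * ∑ v : Fin d → Bool, |h (shift d v ζ)|) + |g ζ| * ωh) := by
        field_simp


end InterpolAux

open InterpolAux

theorem interpol_inner_product
    (d : ℕ) (hd : 1 ≤ d) (Δ s : Fin d → ℝ) (hΔ : ∀ j, 0 < Δ j)
    (g h : (Fin d → ℤ) → ℝ)
    (hg : (Function.support g).Finite) (hh : (Function.support h).Finite) :
    ∃ ε : ℝ,
      (∫ u : Fin d → ℝ, interpol d Δ s g u * interpol d Δ s h u) =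
        (∏ j, Δ j) * (∑' ζ : Fin d → ℤ, g ζ * h ζ) + (∏ j, Δ j) * ε ∧
      |ε| ≤
        (∑' ζ : Fin d → ℤ, |g ζ|) *
            (⨆ v : Fin d → Bool, ⨆ ζ : Fin d → ℤ,
              |h (fun j => ζ j + if v j then 1 else 0) - h ζ|) +
          (∑' ζ : Fin d → ℤ, |h ζ|) *
            (⨆ v : Fin d → Bool, ⨆ ζ : Fin d → ℤ,
              |g (fun j => ζ j + if v j then 1 else 0) - g ζ|) := by
  classical
  have hP : 0 < ∏ j, Δ j := Finset.prod_pos fun j _ => hΔ j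
  set P : ℝ := ∏ j, Δ j with hPdef
  have hPne : P ≠ 0 := ne_of_gt hP
  -- summability
  have hgs : Summable (fun ζ : Fin d → ℤ => |g ζ|) :=
    summable_of_finite_support (hg.subset fun x hx => by
      simp only [Function.mem_support, abs_ne_zero] at hx ⊢; exact hx)
  have hhs : Summable (fun ζ : Fin d → ℤ => |h ζ|) :=
    summable_of_finite_support (hh.subset fun x hx => by
      simp only [Function.mem_support, abs_ne_zero] at hx ⊢; exact hx)
  -- the oscillation bounds
  set ωg : ℝ := ⨆ v : Fin d → Bool, ⨆ ζ : Fin d → ℤ,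
      |g (fun j => ζ j + if v j then 1 else 0) - g ζ| with hωgdef
  set ωh : ℝ := ⨆ v : Fin d → Bool, ⨆ ζ : Fin d → ℤ,
      |h (fun j => ζ j + if v j then 1 else 0) - h ζ| with hωhdef
  have hbg : ∀ (v : Fin d → Bool) (ζ : Fin d → ℤ),
      |g (fun j => ζ j + if v j then 1 else 0) - g ζ| ≤ 2 * ∑' ζ, |g ζ| := by
    intro v ζ
    have h1 : ∀ x, |g x| ≤ ∑' ζ, |g ζ| := fun x => Summable.le_tsum hgs x (fun _ _ => abs_nonneg _)
    calc |g (fun j => ζ j + if v j then 1 else 0) - g ζ|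
        ≤ |g (fun j => ζ j + if v j then 1 else 0)| + |g ζ| := abs_sub _ _
      _ ≤ 2 * ∑' ζ, |g ζ| := by linarith [h1 (fun j => ζ j + if v j then 1 else 0), h1 ζ]
  have hbh : ∀ (v : Fin d → Bool) (ζ : Fin d → ℤ),
      |h (fun j => ζ j + if v j then 1 else 0) - h ζ| ≤ 2 * ∑' ζ, |h ζ| := by
    intro v ζ
    have h1 : ∀ x, |h x| ≤ ∑' ζ, |h ζ| := fun x => Summable.le_tsum hhs x (fun _ _ => abs_nonneg _)
    calc |h (fun j => ζ j + if v j then 1 else 0) - h ζ|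
        ≤ |h (fun j => ζ j + if v j then 1 else 0)| + |h ζ| := abs_sub _ _
      _ ≤ 2 * ∑' ζ, |h ζ| := by linarith [h1 (fun j => ζ j + if v j then 1 else 0), h1 ζ]
  have hgω : ∀ (v : Fin d → Bool) (ζ : Fin d → ℤ), |g (shift d v ζ) - g ζ| ≤ ωg := by
    intro v ζ
    refine le_trans (le_ciSup (f := fun ζ : Fin d → ℤ =>
      |g (fun j => ζ j + if v j then 1 else 0) - g ζ|)
      ⟨2 * ∑' ζ, |g ζ|, by rintro y ⟨ζ', rfl⟩; exact hbg v ζ'⟩ ζ) ?_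
    exact le_ciSup (f := fun v : Fin d → Bool => ⨆ ζ : Fin d → ℤ,
      |g (fun j => ζ j + if v j then 1 else 0) - g ζ|)
      ⟨2 * ∑' ζ, |g ζ|, by rintro y ⟨v', rfl⟩; exact ciSup_le fun ζ' => hbg v' ζ'⟩ v
  have hhω : ∀ (v : Fin d → Bool) (ζ : Fin d → ℤ), |h (shift d v ζ) - h ζ| ≤ ωh := by
    intro v ζ
    refine le_trans (le_ciSup (f := fun ζ : Fin d → ℤ =>
      |h (fun j => ζ j + if v j then 1 else 0) - h ζ|)
      ⟨2 * ∑' ζ, |h ζ|, by rintro y ⟨ζ', rfl⟩; exact hbh v ζ'⟩ ζ) ?_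
    exact le_ciSup (f := fun v : Fin d → Bool => ⨆ ζ : Fin d → ℤ,
      |h (fun j => ζ j + if v j then 1 else 0) - h ζ|)
      ⟨2 * ∑' ζ, |h ζ|, by rintro y ⟨v', rfl⟩; exact ciSup_le fun ζ' => hbh v' ζ'⟩ v
  have hωg0 : 0 ≤ ωg := le_trans (abs_nonneg _) (hgω (fun _ => false) (fun _ => 0))
  have hωh0 : 0 ≤ ωh := le_trans (abs_nonneg _) (hhω (fun _ => false) (fun _ => 0))
  -- the finite set of relevant cells
  set TT : Finset (Fin d → ℤ) := (hg.union hh).toFinset with hTTdef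
  set S : Finset (Fin d → ℤ) := Finset.univ.biUnion
    (fun v : Fin d → Bool => TT.image (fun ζ => fun j => ζ j - if v j then 1 else 0)) with hSdef
  have hmem : ∀ (ζ : Fin d → ℤ) (v : Fin d → Bool),
      (g (shift d v ζ) ≠ 0 ∨ h (shift d v ζ) ≠ 0) → ζ ∈ S := by
    intro ζ v hne
    rw [hSdef]
    refine Finset.mem_biUnion.mpr ⟨v, Finset.mem_univ v,
      Finset.mem_image.mpr ⟨shift d v ζ, ?_, ?_⟩⟩
    · rw [hTTdef, Set.Finite.mem_toFinset]
      rcases hne with hne | hne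
      · exact Set.mem_union_left _ hne
      · exact Set.mem_union_right _ hne
    · funext j
      simp only [shift]
      omega
  have hSg : ∀ ζ ∉ S, ∀ v : Fin d → Bool, g (shift d v ζ) = 0 := by
    intro ζ hζ v
    by_contra hc
    exact hζ (hmem ζ v (Or.inl hc))
  have hSh : ∀ ζ ∉ S, ∀ v : Fin d → Bool, h (shift d v ζ) = 0 := by
    intro ζ hζ v
    by_contra hc
    exact hζ (hmem ζ v (Or.inr hc))
  have hg0 : ∀ ζ ∉ S, g ζ = 0 := by
    intro ζ hζ
    have e : shift d (fun _ => false) ζ = ζ := by funext j; simp [shift]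
    have := hSg ζ hζ (fun _ => false)
    rwa [e] at this
  -- the integral as a finite sum of cell integrals
  have hI : (∫ u : Fin d → ℝ, interpol d Δ s g u * interpol d Δ s h u)
      = (P⁻¹)^2 * ∑ ζ ∈ S, ∫ u in cell d Δ s ζ, FF d Δ s g ζ u * FF d Δ s h ζ u := by
    have hfun : (fun u : Fin d → ℝ => interpol d Δ s g u * interpol d Δ s h u)
        = fun u => (P⁻¹)^2 * ∑ ζ ∈ S,
            (cell d Δ s ζ).indicator (fun w => FF d Δ s g ζ w * FF d Δ s h ζ w) u :=
      funext fun u => interpol_mul d Δ s hΔ g h S hSg hSh u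
    rw [hfun, MeasureTheory.integral_const_mul,
      integral_finset_sum _ (fun ζ _ =>
        (integrableOn_cell d Δ s (f := fun w => FF d Δ s g ζ w * FF d Δ s h ζ w)
          ((continuous_FF d Δ s g ζ).mul (continuous_FF d Δ s h ζ)) ζ
          ).integrable_indicator (measurableSet_cell d Δ s ζ))]
    congr 1
    exact Finset.sum_congr rfl fun ζ _ => integral_indicator (measurableSet_cell d Δ s ζ)
  have htsum : ∑' ζ : Fin d → ℤ, g ζ * h ζ = ∑ ζ ∈ S, g ζ * h ζ :=
    tsum_eq_sum (fun ζ hζ => by rw [hg0 ζ hζ, zero_mul])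
  -- choose ε and verify
  refine ⟨((∫ u : Fin d → ℝ, interpol d Δ s g u * interpol d Δ s h u)
      - P * ∑' ζ : Fin d → ℤ, g ζ * h ζ) / P, ?_, ?_⟩
  · field_simp
    ring
  · rw [abs_div, abs_of_pos hP, div_le_iff₀ hP]
    have expand : (∫ u : Fin d → ℝ, interpol d Δ s g u * interpol d Δ s h u)
        - P * ∑' ζ : Fin d → ℤ, g ζ * h ζ
        = (P⁻¹)^2 * ∑ ζ ∈ S,
            ((∫ u in cell d Δ s ζ, FF d Δ s g ζ u * FF d Δ s h ζ u) - P^3 * (g ζ * h ζ)) := by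
      rw [hI, htsum, Finset.sum_sub_distrib, mul_sub, ← Finset.mul_sum]
      congr 1
      field_simp
    rw [expand]
    have habs : |(P⁻¹)^2 * ∑ ζ ∈ S,
          ((∫ u in cell d Δ s ζ, FF d Δ s g ζ u * FF d Δ s h ζ u) - P^3 * (g ζ * h ζ))|
        ≤ (P⁻¹)^2 * ∑ ζ ∈ S,
            |(∫ u in cell d Δ s ζ, FF d Δ s g ζ u * FF d Δ s h ζ u) - P^3 * (g ζ * h ζ)| := by
      rw [abs_mul, abs_of_nonneg (by positivity : (0:ℝ) ≤ (P⁻¹)^2)]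
      exact mul_le_mul_of_nonneg_left (Finset.abs_sum_le_sum_abs _ _) (by positivity)
    have hcell : ∀ ζ ∈ S,
        |(∫ u in cell d Δ s ζ, FF d Δ s g ζ u * FF d Δ s h ζ u) - P^3 * (g ζ * h ζ)|
        ≤ P^3 * (ωg * (((2:ℝ)^d)⁻¹ * ∑ v : Fin d → Bool, |h (shift d v ζ)|) + |g ζ| * ωh) :=
      fun ζ _ => cell_bound d Δ s hΔ g h ωg ωh hgω hhω ζ
    have hsumb : ∑ ζ ∈ S,
          (ωg * (((2:ℝ)^d)⁻¹ * ∑ v : Fin d → Bool, |h (shift d v ζ)|) + |g ζ| * ωh)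
        ≤ ωg * ∑' ζ : Fin d → ℤ, |h ζ| + (∑' ζ : Fin d → ℤ, |g ζ|) * ωh := by
      rw [Finset.sum_add_distrib]
      have part1 : ∑ ζ ∈ S, ωg * (((2:ℝ)^d)⁻¹ * ∑ v : Fin d → Bool, |h (shift d v ζ)|)
          ≤ ωg * ∑' ζ : Fin d → ℤ, |h ζ| := by
        rw [← Finset.mul_sum]
        have hswap : ∑ ζ ∈ S, (((2:ℝ)^d)⁻¹ * ∑ v : Fin d → Bool, |h (shift d v ζ)|)
            = ((2:ℝ)^d)⁻¹ * ∑ v : Fin d → Bool, ∑ ζ ∈ S, |h (shift d v ζ)| := by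
          rw [← Finset.mul_sum, Finset.sum_comm]
        rw [hswap]
        have hinner : ∀ v : Fin d → Bool, ∑ ζ ∈ S, |h (shift d v ζ)| ≤ ∑' ζ, |h ζ| := by
          intro v
          have hinj : Set.InjOn (shift d v) S := by
            intro a _ b _ hab
            funext j
            have := congrFun hab j
            simpa [shift] using this
          rw [← Finset.sum_image (f := fun ζ => |h ζ|) (fun a ha b hb hab => hinj ha hb hab)]
          exact Summable.sum_le_tsum _ (fun _ _ => abs_nonneg _) hhs
        have hsv : ∑ v : Fin d → Bool, ∑ ζ ∈ S, |h (shift d v ζ)|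
            ≤ ∑ _v : Fin d → Bool, ∑' ζ, |h ζ| := Finset.sum_le_sum fun v _ => hinner v
        have card2 : ((Finset.univ : Finset (Fin d → Bool)).card : ℝ) = 2^d := by
          simp [Finset.card_univ]
        calc ωg * (((2:ℝ)^d)⁻¹ * ∑ v : Fin d → Bool, ∑ ζ ∈ S, |h (shift d v ζ)|)
            ≤ ωg * (((2:ℝ)^d)⁻¹ * ∑ _v : Fin d → Bool, ∑' ζ, |h ζ|) := by
              refine mul_le_mul_of_nonneg_left (mul_le_mul_of_nonneg_left hsv (by positivity))
                hωg0
          _ = ωg * ∑' ζ : Fin d → ℤ, |h ζ| := by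
              rw [Finset.sum_const, nsmul_eq_mul, card2]
              have h2d : (0:ℝ) < 2^d := by positivity
              field_simp
      have part2 : ∑ ζ ∈ S, |g ζ| * ωh ≤ (∑' ζ : Fin d → ℤ, |g ζ|) * ωh := by
        rw [← Finset.sum_mul]
        exact mul_le_mul_of_nonneg_right
          (Summable.sum_le_tsum _ (fun _ _ => abs_nonneg _) hgs) hωh0
      exact add_le_add part1 part2
    calc |(P⁻¹)^2 * ∑ ζ ∈ S,
          ((∫ u in cell d Δ s ζ, FF d Δ s g ζ u * FF d Δ s h ζ u) - P^3 * (g ζ * h ζ))|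
        ≤ (P⁻¹)^2 * ∑ ζ ∈ S,
            |(∫ u in cell d Δ s ζ, FF d Δ s g ζ u * FF d Δ s h ζ u) - P^3 * (g ζ * h ζ)| := habs
      _ ≤ (P⁻¹)^2 * ∑ ζ ∈ S, P^3 *
            (ωg * (((2:ℝ)^d)⁻¹ * ∑ v : Fin d → Bool, |h (shift d v ζ)|) + |g ζ| * ωh) :=
          mul_le_mul_of_nonneg_left (Finset.sum_le_sum hcell) (by positivity)
      _ = P * ∑ ζ ∈ S,
            (ωg * (((2:ℝ)^d)⁻¹ * ∑ v : Fin d → Bool, |h (shift d v ζ)|) + |g ζ| * ωh) := by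
          rw [← Finset.mul_sum, ← mul_assoc]
          congr 1
          field_simp
      _ ≤ P * (ωg * ∑' ζ : Fin d → ℤ, |h ζ| + (∑' ζ : Fin d → ℤ, |g ζ|) * ωh) :=
          mul_le_mul_of_nonneg_left hsumb hP.le
      _ = ((∑' ζ : Fin d → ℤ, |g ζ|) * ωh + (∑' ζ : Fin d → ℤ, |h ζ|) * ωg) * P := by ring
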